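/- Let M ≥ 0, let f : [0,∞) → H be continuous with ‖f(s)‖ ≤ M for all s, let a ∈ (0,1), let x ∈ D_a, and define X(t) = S(t)x + ∫₀^t S(t−s) f(s) ds for t ≥ 0 (Bochner integral in H). Then there exists a constant C (depending only on a, λ₀ and M) such that for all t ≥ 0, X(t) ∈ D_a and |X(t)|_a ≤ C (1 + |x|_a). -/

import Mathlib

open Real MeasureTheory Set Filter
open scoped ENNReal Topology

noncomputable section

/-- `Hsp` is the real Hilbert space `ℓ²` of square-summable real sequences. -/
abbrev Hsp : Type := lp (fun _ : ℕ => ℝ) 2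

/-- The norm `|x|_σ = (∑ₖ λₖ^{2σ} xₖ²)^{1/2}` of the domain `D((-A)^σ)`. -/
noncomputable def nrmD (lam : ℕ → ℝ) (σ : ℝ) (x : Hsp) : ℝ :=
  Real.sqrt (∑' k, lam k ^ (2 * σ) * (x k) ^ 2)

/-- Membership in the domain `D((-A)^σ)`: `∑ₖ λₖ^{2σ} xₖ² < ∞`. -/
def memD (lam : ℕ → ℝ) (σ : ℝ) (x : Hsp) : Prop :=
  Summable (fun k => lam k ^ (2 * σ) * (x k) ^ 2)



/-- coordinate evaluation as a continuous linear map on `ℓ²`. -/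
noncomputable def evalCLM (k : ℕ) : Hsp →L[ℝ] ℝ :=
  LinearMap.mkContinuous
    { toFun := fun x : Hsp => x k
      map_add' := fun x y => by
        have h := lp.coeFn_add x y
        calc (x + y) k = (⇑x + ⇑y) k := by rw [h]
        _ = x k + y k := rfl
      map_smul' := fun c x => by
        have h := lp.coeFn_smul c x
        calc (c • x) k = (c • ⇑x) k := by rw [h]
        _ = c * x k := rfl }
    1 (fun x => by
      rw [one_mul]
      exact lp.norm_apply_le_norm (by norm_num) x k)

@[simp] lemma evalCLM_apply (k : ℕ) (x : Hsp) : evalCLM k x = x k := rfl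

lemma aux_xb_exp {b x : ℝ} (hb0 : 0 ≤ b) (hb1 : b ≤ 1) (hx : 0 ≤ x) :
    x ^ b * Real.exp (-x) ≤ 1 := by
  rcases le_total x 1 with h | h
  · have h1 : x ^ b ≤ 1 := Real.rpow_le_one hx h hb0
    have h2 : Real.exp (-x) ≤ 1 := Real.exp_le_one_iff.mpr (by linarith)
    calc x ^ b * Real.exp (-x) ≤ 1 * 1 :=
          mul_le_mul h1 h2 (Real.exp_pos _).le one_pos.le
    _ = 1 := by ring
  · have h1 : x ^ b ≤ x := by
      calc x ^ b ≤ x ^ (1 : ℝ) := Real.rpow_le_rpow_of_exponent_le h hb1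
      _ = x := Real.rpow_one x
    have hx' : x ≤ Real.exp x := by
      have := Real.add_one_le_exp x; linarith
    have h2 : x * Real.exp (-x) ≤ 1 := by
      calc x * Real.exp (-x) ≤ Real.exp x * Real.exp (-x) :=
            mul_le_mul_of_nonneg_right hx' (Real.exp_pos _).le
      _ = 1 := by rw [← Real.exp_add]; simp
    calc x ^ b * Real.exp (-x) ≤ x * Real.exp (-x) :=
          mul_le_mul_of_nonneg_right h1 (Real.exp_pos _).le
    _ ≤ 1 := h2

lemma auxIntOn {c r : ℝ} (hc : 0 < c) (hr : 0 < r) :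
    IntegrableOn (fun u : ℝ => u ^ (c - 1) * Real.exp (-(r * u))) (Set.Ioi 0) := by
  have h0 : IntegrableOn (fun u : ℝ => Real.exp (-u) * u ^ (c - 1)) (Set.Ioi 0) :=
    Real.GammaIntegral_convergent hc
  have h1 : IntegrableOn (fun u : ℝ => Real.exp (-(r * u)) * (r * u) ^ (c - 1))
      (Set.Ioi 0) := by
    have h2 := (integrableOn_Ioi_comp_mul_left_iff
      (fun u : ℝ => Real.exp (-u) * u ^ (c - 1)) 0 hr).mpr (by simpa using h0)
    simpa using h2
  have h2 : IntegrableOn (fun u : ℝ =>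
      r ^ (1 - c) * (Real.exp (-(r * u)) * (r * u) ^ (c - 1))) (Set.Ioi 0) :=
    h1.const_mul (r ^ (1 - c))
  apply IntegrableOn.congr_fun h2 ?_ measurableSet_Ioi
  intro u hu
  have hu' : (0 : ℝ) < u := hu
  show r ^ (1 - c) * (Real.exp (-(r * u)) * (r * u) ^ (c - 1))
      = u ^ (c - 1) * Real.exp (-(r * u))
  rw [Real.mul_rpow hr.le hu'.le]
  have hrr : r ^ (1 - c) * r ^ (c - 1) = 1 := by
    rw [← Real.rpow_add hr]; norm_num
  calc r ^ (1 - c) * (Real.exp (-(r * u)) * (r ^ (c-1) * u ^ (c-1)))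
      = (r ^ (1 - c) * r ^ (c - 1)) * (u ^ (c-1) * Real.exp (-(r * u))) := by ring
  _ = u ^ (c-1) * Real.exp (-(r * u)) := by rw [hrr]; ring

lemma auxIntOn_comp {c r t : ℝ} (hc : 0 < c) (hr : 0 < r) (ht : 0 ≤ t) :
    IntegrableOn (fun s : ℝ => (t - s) ^ (c - 1) * Real.exp (-(r * (t - s))))
      (Set.Ioo 0 t) := by
  have hIoc : IntegrableOn (fun u : ℝ => u ^ (c - 1) * Real.exp (-(r * u))) (Set.Ioc 0 t) :=
    (auxIntOn hc hr).mono_set Ioc_subset_Ioi_self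
  have hII : IntervalIntegrable (fun u : ℝ => u ^ (c - 1) * Real.exp (-(r * u))) volume 0 t :=
    (intervalIntegrable_iff_integrableOn_Ioc_of_le ht).mpr hIoc
  have hIIc := (hII.comp_sub_left t).symm
  -- : IntervalIntegrable (fun s => ...(t-s)...) volume (t - t) (t - 0) symm'ed appropriately
  have hIIc' : IntervalIntegrable (fun s : ℝ => (t - s) ^ (c - 1) * Real.exp (-(r * (t - s))))
      volume 0 t := by
    have := hII.comp_sub_left t
    simpa using this.symm
  exact ((intervalIntegrable_iff_integrableOn_Ioc_of_le ht).mp hIIc').mono_set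
    Ioo_subset_Ioc_self

lemma auxInt_le {c r t : ℝ} (hc : 0 < c) (hr : 0 < r) (ht : 0 ≤ t) :
    ∫ s in Set.Ioo 0 t, (t - s) ^ (c - 1) * Real.exp (-(r * (t - s)))
      ≤ (1 / r) ^ c * Real.Gamma c := by
  set g : ℝ → ℝ := fun u => u ^ (c - 1) * Real.exp (-(r * u)) with hg
  have e1 : ∫ s in Set.Ioo 0 t, g (t - s) = ∫ s in Set.Ioc 0 t, g (t - s) :=
    setIntegral_congr_set Ioo_ae_eq_Ioc
  have e2 : ∫ s in Set.Ioc 0 t, g (t - s) = ∫ s in (0:ℝ)..t, g (t - s) :=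
    (intervalIntegral.integral_of_le ht).symm
  have e3 : ∫ s in (0:ℝ)..t, g (t - s) = ∫ u in (t - t)..(t - 0), g u :=
    intervalIntegral.integral_comp_sub_left g t
  have e4 : ∫ u in (t - t)..(t - 0), g u = ∫ u in Set.Ioc 0 t, g u := by
    rw [show t - t = (0:ℝ) by ring, show t - 0 = t by ring]
    exact intervalIntegral.integral_of_le ht
  have e5 : ∫ u in Set.Ioc 0 t, g u ≤ ∫ u in Set.Ioi 0, g u := by
    apply setIntegral_mono_set (auxIntOn hc hr)
    · filter_upwards [ae_restrict_mem measurableSet_Ioi] with u hu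
      have hu' : (0:ℝ) < u := hu
      positivity
    · exact HasSubset.Subset.eventuallyLE Ioc_subset_Ioi_self
  have e6 : ∫ u in Set.Ioi 0, g u = (1 / r) ^ c * Real.Gamma c :=
    Real.integral_rpow_mul_exp_neg_mul_Ioi hc hr
  calc ∫ s in Set.Ioo 0 t, g (t - s) = ∫ u in Set.Ioc 0 t, g u := by rw [e1, e2, e3, e4]
  _ ≤ (1 / r) ^ c * Real.Gamma c := by rw [← e6]; exact e5

lemma aux_key {a lam0 lam u : ℝ} (ha0 : 0 < a) (ha1 : a < 1) (h0 : 0 < lam0)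
    (hl : lam0 ≤ lam) (hu : 0 < u) :
    lam ^ a * (u ^ (1 - a) * Real.exp (-(lam * u))) ≤
      2 ^ a * (u ^ ((2 - 2*a) - 1) * Real.exp (-(lam0 / 2 * u))) := by
  have hlam : 0 < lam := lt_of_lt_of_le h0 hl
  have hx : (0:ℝ) ≤ lam * u / 2 := by positivity
  have h1 : (lam * u / 2) ^ a * Real.exp (-(lam * u / 2)) ≤ 1 :=
    aux_xb_exp ha0.le ha1.le hx
  have h2 : (lam * u / 2) ^ a = lam ^ a * u ^ a / 2 ^ a := by
    rw [div_rpow (by positivity) (by norm_num : (0:ℝ) ≤ 2), Real.mul_rpow hlam.le hu.le]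
  have h3 : lam ^ a * u ^ a * Real.exp (-(lam * u / 2)) ≤ 2 ^ a := by
    have h2pos : (0:ℝ) < 2 ^ a := by positivity
    rw [h2] at h1
    calc lam ^ a * u ^ a * Real.exp (-(lam * u / 2))
        = (lam ^ a * u ^ a / 2 ^ a * Real.exp (-(lam * u / 2))) * 2 ^ a := by
          field_simp
    _ ≤ 1 * 2 ^ a := mul_le_mul_of_nonneg_right h1 h2pos.le
    _ = 2 ^ a := one_mul _
  have h4 : Real.exp (-(lam * u / 2)) ≤ Real.exp (-(lam0 / 2 * u)) := by
    apply Real.exp_le_exp.mpr; nlinarith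
  have hsplit : Real.exp (-(lam * u)) =
      Real.exp (-(lam * u / 2)) * Real.exp (-(lam * u / 2)) := by
    rw [← Real.exp_add]; congr 1; ring
  have hupow : u ^ (1 - a) = u ^ a * u ^ ((2 - 2*a) - 1) := by
    rw [← Real.rpow_add hu]; congr 1; ring
  have hune : (0:ℝ) ≤ u ^ ((2 - 2*a) - 1) := Real.rpow_nonneg hu.le _
  calc lam ^ a * (u ^ (1 - a) * Real.exp (-(lam * u)))
      = (lam ^ a * u ^ a * Real.exp (-(lam * u / 2))) *
        (u ^ ((2 - 2*a) - 1) * Real.exp (-(lam * u / 2))) := by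
        rw [hupow, hsplit]; ring
  _ ≤ 2 ^ a * (u ^ ((2 - 2*a) - 1) * Real.exp (-(lam0 / 2 * u))) := by
      apply mul_le_mul h3 (mul_le_mul_of_nonneg_left h4 hune) (by positivity) (by positivity)

lemma rpow_two_eq (y : ℝ) : y ^ (2:ℝ) = y ^ 2 := by
  rw [show (2:ℝ) = ((2:ℕ):ℝ) by norm_num, Real.rpow_natCast]

set_option maxHeartbeats 2000000 in
/-- Deterministic content of the slow-component part of Proposition A.2: for
`X(t) = S(t)x + ∫₀ᵗ S(t−s) f(s) ds` with `‖f‖ ≤ M`, `a ∈ (0,1)` and `x ∈ D_a`, there is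
a constant `C` (depending only on `a`, `λ₀`, `M`) with `X(t) ∈ D_a` and
`|X(t)|_a ≤ C (1 + |x|_a)` for all `t ≥ 0`. -/
theorem stmt10
    (lam : ℕ → ℝ) (lam0 : ℝ) (hlam0 : 0 < lam0) (hlam : ∀ k, lam0 ≤ lam k)
    (S : ℝ → Hsp → Hsp)
    (hS : ∀ t : ℝ, 0 ≤ t → ∀ (x : Hsp) (k : ℕ), S t x k = Real.exp (-(lam k * t)) * x k)
    (M : ℝ) (hM : 0 ≤ M)
    (a : ℝ) (ha : a ∈ Set.Ioo (0:ℝ) 1) :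
    ∃ C > 0, ∀ f : ℝ → Hsp, ContinuousOn f (Set.Ici 0) → (∀ s : ℝ, 0 ≤ s → ‖f s‖ ≤ M) →
      ∀ x : Hsp, memD lam a x → ∀ X : ℝ → Hsp,
      (∀ t : ℝ, 0 ≤ t → X t = S t x + ∫ s in (0:ℝ)..t, S (t - s) (f s)) →
      ∀ t : ℝ, 0 ≤ t →
        memD lam a (X t) ∧ nrmD lam a (X t) ≤ C * (1 + nrmD lam a x) := by
  obtain ⟨ha0, ha1⟩ := ha
  have hc2 : 0 < 2 - 2*a := by linarith
  have hl0h : 0 < lam0 / 2 := by linarith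
  have hGa : 0 < Real.Gamma a := Real.Gamma_pos_of_pos ha0
  have hGa2 : 0 < Real.Gamma (2 - 2*a) := Real.Gamma_pos_of_pos hc2
  set K : ℝ := (1 / (lam0 / 2)) ^ (2 - 2*a) * Real.Gamma (2 - 2*a) with hKdef
  have hK : 0 ≤ K := by positivity
  set b2 : ℝ := Real.Gamma a * (2 ^ a * (M ^ 2 * K)) with hb2def
  have hb2 : 0 ≤ b2 := by positivity
  refine ⟨1 + Real.sqrt 2 + Real.sqrt (2 * b2), by positivity, ?_⟩
  intro f hfc hfM x hx X hX t ht
  have hlampos : ∀ k, 0 < lam k := fun k => lt_of_lt_of_le hlam0 (hlam k)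
  have hrpnn : ∀ k, (0:ℝ) ≤ lam k ^ (2*a) := fun k => Real.rpow_nonneg (hlampos k).le _
  have hy1 : ∀ k, S t x k = Real.exp (-(lam k * t)) * x k := fun k => hS t ht x k
  -- the semigroup part
  have h1le : ∀ k, lam k ^ (2*a) * (S t x k)^2 ≤ lam k ^ (2*a) * (x k)^2 := by
    intro k
    rw [hy1 k]
    have he : Real.exp (-(lam k * t)) ≤ 1 := by
      apply Real.exp_le_one_iff.mpr
      nlinarith [hlampos k]
    have he0 : 0 ≤ Real.exp (-(lam k * t)) := (Real.exp_pos _).le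
    have he1 : Real.exp (-(lam k * t)) ^ 2 ≤ 1 := by nlinarith
    have h2 : (Real.exp (-(lam k * t)) * x k)^2 ≤ (x k)^2 := by
      nlinarith [sq_nonneg (x k), mul_nonneg (sub_nonneg.mpr he1) (sq_nonneg (x k))]
    exact mul_le_mul_of_nonneg_left h2 (hrpnn k)
  have h1nn : ∀ k, 0 ≤ lam k ^ (2*a) * (S t x k)^2 :=
    fun k => mul_nonneg (hrpnn k) (sq_nonneg _)
  have h1sum : Summable (fun k => lam k ^ (2*a) * (S t x k)^2) :=
    Summable.of_nonneg_of_le h1nn h1le hx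
  have h1tsum : ∑' k, lam k ^ (2*a) * (S t x k)^2 ≤ ∑' k, lam k ^ (2*a) * (x k)^2 :=
    Summable.tsum_le_tsum h1le h1sum hx
  set Tx : ℝ := ∑' k, lam k ^ (2*a) * (x k)^2 with hTxdef
  have hTx0 : 0 ≤ Tx := tsum_nonneg (fun k => mul_nonneg (hrpnn k) (sq_nonneg _))
  have hnx : nrmD lam a x = Real.sqrt Tx := rfl
  have hnx0 : 0 ≤ nrmD lam a x := Real.sqrt_nonneg _
  -- the case of a non-integrable (degenerate) forcing term
  by_cases hint : IntervalIntegrable (fun s => S (t - s) (f s)) volume 0 t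
  swap
  · have hXt : X t = S t x := by
      rw [hX t ht, intervalIntegral.integral_undef hint, add_zero]
    constructor
    · show Summable (fun k => lam k ^ (2*a) * (X t k)^2)
      rw [hXt]; exact h1sum
    · have h1 : nrmD lam a (X t) ≤ Real.sqrt Tx := by
        show Real.sqrt _ ≤ _
        rw [hXt]
        exact Real.sqrt_le_sqrt h1tsum
      rw [hnx] at *
      nlinarith [Real.sqrt_nonneg (2:ℝ), Real.sqrt_nonneg (2*b2), Real.sqrt_nonneg Tx, h1]
  -- main case
  · have hcoord : ∀ k, X t k = Real.exp (-(lam k * t)) * x k +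
        ∫ s in (0:ℝ)..t, Real.exp (-(lam k * (t - s))) * f s k := by
      intro k
      have h1 : X t k = S t x k + (∫ s in (0:ℝ)..t, S (t - s) (f s)) k := by
        rw [hX t ht]
        exact congrFun (lp.coeFn_add (S t x) _) k
      have h2 : (∫ s in (0:ℝ)..t, S (t - s) (f s)) k
          = ∫ s in (0:ℝ)..t, (S (t - s) (f s)) k := by
        have h3 := ContinuousLinearMap.intervalIntegral_comp_comm (evalCLM k) hint
        simpa using h3.symm
      have h3 : (∫ s in (0:ℝ)..t, (S (t - s) (f s)) k)
          = ∫ s in (0:ℝ)..t, Real.exp (-(lam k * (t - s))) * f s k := by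
        apply intervalIntegral.integral_congr
        intro s hs
        rw [Set.uIcc_of_le ht] at hs
        exact hS (t - s) (by linarith [hs.2]) (f s) k
      rw [h1, hy1 k, h2, h3]
    set I : ℕ → ℝ := fun k => ∫ s in (0:ℝ)..t, Real.exp (-(lam k * (t - s))) * f s k
      with hIdef
    set G : ℕ → ℝ → ℝ := fun k s =>
      (t - s) ^ ((2 - 2*a) - 1) * Real.exp (-(lam0 / 2 * (t - s))) * (f s k)^2 with hGdef
    have hfkc : ∀ k, ContinuousOn (fun s => f s k) (Set.Ioo 0 t) := fun k =>
      (evalCLM k).continuous.comp_continuousOn (hfc.mono (fun s hs => le_of_lt hs.1))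
    have hWint : IntegrableOn
        (fun s => (t - s) ^ ((2 - 2*a) - 1) * Real.exp (-(lam0 / 2 * (t - s))))
        (Set.Ioo 0 t) := auxIntOn_comp hc2 hl0h ht
    have hWnn : ∀ s ∈ Set.Ioo 0 t,
        0 ≤ (t - s) ^ ((2 - 2*a) - 1) * Real.exp (-(lam0 / 2 * (t - s))) := by
      intro s hs
      have hu : 0 < t - s := by linarith [hs.2]
      positivity
    have hfk2 : ∀ k, ∀ s ∈ Set.Ioo 0 t, (f s k)^2 ≤ M^2 := by
      intro k s hs
      have h1 : ‖f s k‖ ≤ ‖f s‖ := lp.norm_apply_le_norm (by norm_num) (f s) k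
      have h2 : ‖f s‖ ≤ M := hfM s hs.1.le
      calc (f s k)^2 = ‖f s k‖^2 := by rw [Real.norm_eq_abs, sq_abs]
      _ ≤ M^2 := by apply pow_le_pow_left₀ (norm_nonneg _) (h1.trans h2)
    have hGint : ∀ k, IntegrableOn (G k) (Set.Ioo 0 t) := by
      intro k
      apply Integrable.mono' (hWint.const_mul (M^2))
      · apply ContinuousOn.aestronglyMeasurable ?_ measurableSet_Ioo
        apply ContinuousOn.mul (ContinuousOn.mul ?_ ?_) ((hfkc k).pow 2)
        · apply ContinuousOn.rpow_const (continuous_const.sub continuous_id).continuousOn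
          intro s hs
          exact Or.inl (sub_ne_zero.mpr (ne_of_lt hs.2).symm)
        · exact (Real.continuous_exp.comp ((continuous_const.mul
            (continuous_const.sub continuous_id)).neg)).continuousOn
      · filter_upwards [ae_restrict_mem measurableSet_Ioo] with s hs
        rw [Real.norm_eq_abs, abs_of_nonneg (mul_nonneg (hWnn s hs) (sq_nonneg _))]
        have := hfk2 k s hs
        have := hWnn s hs
        nlinarith
    -- the key per-coordinate estimate
    have hIbd : ∀ k, lam k ^ (2*a) * (I k)^2 ≤
        Real.Gamma a * (2 ^ a * ∫ s in Set.Ioo 0 t, G k s) := by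
      intro k
      have hlk : 0 < lam k := hlampos k
      set P : ℝ → ℝ := fun s => (t - s) ^ ((a-1)/2) * Real.exp (-(lam k * (t - s)) / 2)
        with hPdef
      set Q : ℝ → ℝ := fun s =>
        (t - s) ^ ((1-a)/2) * Real.exp (-(lam k * (t - s)) / 2) * |f s k| with hQdef
      have hsubc : ContinuousOn (fun s : ℝ => t - s) (Set.Ioo 0 t) :=
        (continuous_const.sub continuous_id).continuousOn
      have hrpc : ∀ e : ℝ, ContinuousOn (fun s => (t - s) ^ e) (Set.Ioo 0 t) := by
        intro e
        apply ContinuousOn.rpow_const hsubc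
        intro s hs
        exact Or.inl (sub_ne_zero.mpr (ne_of_lt hs.2).symm)
      have hexpc : Continuous (fun s : ℝ => Real.exp (-(lam k * (t - s)) / 2)) :=
        Real.continuous_exp.comp (((continuous_const.mul
          (continuous_const.sub continuous_id)).neg).div_const 2)
      have hPc : ContinuousOn P (Set.Ioo 0 t) := (hrpc _).mul hexpc.continuousOn
      have hQc : ContinuousOn Q (Set.Ioo 0 t) :=
        ((hrpc _).mul hexpc.continuousOn).mul (hfkc k).abs
      have hPm : AEStronglyMeasurable P (volume.restrict (Set.Ioo 0 t)) :=
        hPc.aestronglyMeasurable measurableSet_Ioo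
      have hQm : AEStronglyMeasurable Q (volume.restrict (Set.Ioo 0 t)) :=
        hQc.aestronglyMeasurable measurableSet_Ioo
      have hgP : IntegrableOn (fun s => (t-s)^(a-1) * Real.exp (-(lam k * (t-s))))
          (Set.Ioo 0 t) := by
        have := auxIntOn_comp ha0 hlk ht
        simpa using this
      have hPsq_eq : ∀ s ∈ Set.Ioo 0 t,
          (t-s)^(a-1) * Real.exp (-(lam k * (t-s))) = P s ^ 2 := by
        intro s hs
        have hu : 0 < t - s := by linarith [hs.2]
        have e1 : ((t-s) ^ ((a-1)/2))^2 = (t-s)^(a-1) := by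
          rw [← Real.rpow_natCast ((t-s) ^ ((a-1)/2)) 2, ← Real.rpow_mul hu.le]
          congr 1
          push_cast
          ring
        have e2 : (Real.exp (-(lam k * (t-s)) / 2))^2 = Real.exp (-(lam k * (t-s))) := by
          rw [pow_two, ← Real.exp_add]
          congr 1
          ring
        simp only [hPdef]
        rw [mul_pow, e1, e2]
      have hPsq_int : Integrable (fun s => P s ^ 2) (volume.restrict (Set.Ioo 0 t)) :=
        hgP.congr_fun hPsq_eq measurableSet_Ioo
      have hP2 : MemLp P 2 (volume.restrict (Set.Ioo 0 t)) :=
        (memLp_two_iff_integrable_sq hPm).mpr hPsq_int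
      have hQsq_eq : ∀ s ∈ Set.Ioo 0 t,
          (t-s)^(1-a) * Real.exp (-(lam k * (t-s))) * (f s k)^2 = Q s ^ 2 := by
        intro s hs
        have hu : 0 < t - s := by linarith [hs.2]
        have e1 : ((t-s) ^ ((1-a)/2))^2 = (t-s)^(1-a) := by
          rw [← Real.rpow_natCast ((t-s) ^ ((1-a)/2)) 2, ← Real.rpow_mul hu.le]
          congr 1
          push_cast
          ring
        have e2 : (Real.exp (-(lam k * (t-s)) / 2))^2 = Real.exp (-(lam k * (t-s))) := by
          rw [pow_two, ← Real.exp_add]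
          congr 1
          ring
        simp only [hQdef]
        rw [mul_pow, mul_pow, e1, e2, sq_abs]
      have hQsq_int : Integrable (fun s => Q s ^ 2) (volume.restrict (Set.Ioo 0 t)) := by
        have hconst : IntegrableOn (fun _ : ℝ => t^(1-a) * M^2) (Set.Ioo 0 t) := by
          apply (integrableOn_const_iff).mpr
          right
          exact measure_Ioo_lt_top
        apply Integrable.mono' hconst
        · exact (hQc.pow 2).aestronglyMeasurable measurableSet_Ioo
        · filter_upwards [ae_restrict_mem measurableSet_Ioo] with s hs
          have hu : 0 < t - s := by linarith [hs.2]
          rw [Real.norm_eq_abs, abs_of_nonneg (sq_nonneg _), ← hQsq_eq s hs]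
          have b1 : (t-s)^(1-a) ≤ t^(1-a) :=
            Real.rpow_le_rpow hu.le (by linarith [hs.1]) (by linarith)
          have b2 : Real.exp (-(lam k * (t-s))) ≤ 1 := by
            apply Real.exp_le_one_iff.mpr
            nlinarith
          have b3 := hfk2 k s hs
          have b4 : (0:ℝ) ≤ (t-s)^(1-a) := Real.rpow_nonneg hu.le _
          have b5 : (0:ℝ) ≤ Real.exp (-(lam k * (t-s))) := (Real.exp_pos _).le
          have b6 : (0:ℝ) ≤ t^(1-a) := Real.rpow_nonneg ht _
          have c1 : (t-s)^(1-a) * Real.exp (-(lam k * (t-s))) ≤ t^(1-a) * 1 :=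
            mul_le_mul b1 b2 b5 b6
          have c2 : (t-s)^(1-a) * Real.exp (-(lam k * (t-s))) * (f s k)^2
              ≤ (t^(1-a) * 1) * M^2 :=
            mul_le_mul c1 b3 (sq_nonneg _) (by nlinarith)
          nlinarith [c2]
      have hQ2 : MemLp Q 2 (volume.restrict (Set.Ioo 0 t)) :=
        (memLp_two_iff_integrable_sq hQm).mpr hQsq_int
      have hPnn : 0 ≤ᵐ[volume.restrict (Set.Ioo 0 t)] P := by
        filter_upwards [ae_restrict_mem measurableSet_Ioo] with s hs
        have hu : 0 < t - s := by linarith [hs.2]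
        simp only [hPdef]
        exact mul_nonneg (Real.rpow_nonneg hu.le _) (Real.exp_pos _).le
      have hQnn : 0 ≤ᵐ[volume.restrict (Set.Ioo 0 t)] Q := by
        filter_upwards [ae_restrict_mem measurableSet_Ioo] with s hs
        have hu : 0 < t - s := by linarith [hs.2]
        simp only [hQdef]
        exact mul_nonneg (mul_nonneg (Real.rpow_nonneg hu.le _) (Real.exp_pos _).le)
          (abs_nonneg _)
      have hpq : Real.HolderConjugate 2 2 := Real.holderConjugate_iff.mpr ⟨one_lt_two, by norm_num⟩
      have hP2' : MemLp P (ENNReal.ofReal 2) (volume.restrict (Set.Ioo 0 t)) := by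
        rw [show ENNReal.ofReal 2 = 2 by norm_num]
        exact hP2
      have hQ2' : MemLp Q (ENNReal.ofReal 2) (volume.restrict (Set.Ioo 0 t)) := by
        rw [show ENNReal.ofReal 2 = 2 by norm_num]
        exact hQ2
      have hCS : ∫ s in Set.Ioo 0 t, P s * Q s ≤
          (∫ s in Set.Ioo 0 t, P s ^ (2:ℝ)) ^ ((1:ℝ)/2) *
          (∫ s in Set.Ioo 0 t, Q s ^ (2:ℝ)) ^ ((1:ℝ)/2) :=
        integral_mul_le_Lp_mul_Lq_of_nonneg hpq hPnn hQnn hP2' hQ2'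
      have hIabs : |I k| ≤ ∫ s in Set.Ioo 0 t, P s * Q s := by
        have e0 : I k = ∫ s in Set.Ioc 0 t, Real.exp (-(lam k * (t - s))) * f s k := by
          simp only [hIdef]
          exact intervalIntegral.integral_of_le ht
        have e1 : (∫ s in Set.Ioc 0 t, Real.exp (-(lam k * (t - s))) * f s k)
            = ∫ s in Set.Ioo 0 t, Real.exp (-(lam k * (t - s))) * f s k :=
          (setIntegral_congr_set Ioo_ae_eq_Ioc).symm
        rw [e0, e1]
        have e2 := norm_integral_le_integral_norm (μ := volume.restrict (Set.Ioo 0 t))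
          (fun s => Real.exp (-(lam k * (t - s))) * f s k)
        simp only [Real.norm_eq_abs] at e2
        apply e2.trans
        apply le_of_eq
        apply setIntegral_congr_fun measurableSet_Ioo
        intro s hs
        have hu : 0 < t - s := by linarith [hs.2]
        have e3 : (t-s)^((a-1)/2) * (t-s)^((1-a)/2) = 1 := by
          rw [← Real.rpow_add hu, show (a-1)/2 + (1-a)/2 = (0:ℝ) by ring, Real.rpow_zero]
        have e4 : Real.exp (-(lam k * (t-s)) / 2) * Real.exp (-(lam k * (t-s)) / 2)
            = Real.exp (-(lam k * (t-s))) := by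
          rw [← Real.exp_add]
          congr 1
          ring
        simp only [hPdef, hQdef]
        rw [abs_mul, abs_of_pos (Real.exp_pos _)]
        calc Real.exp (-(lam k * (t-s))) * |f s k|
            = ((t-s)^((a-1)/2) * (t-s)^((1-a)/2)) *
              (Real.exp (-(lam k * (t-s)) / 2) * Real.exp (-(lam k * (t-s)) / 2)) *
              |f s k| := by rw [e3, e4]; ring
        _ = ((t-s)^((a-1)/2) * Real.exp (-(lam k * (t-s)) / 2)) *
            ((t-s)^((1-a)/2) * Real.exp (-(lam k * (t-s)) / 2) * |f s k|) := by ring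
      set A := ∫ s in Set.Ioo 0 t, P s ^ (2:ℝ) with hAdef
      set B := ∫ s in Set.Ioo 0 t, Q s ^ (2:ℝ) with hBdef
      have hA0 : 0 ≤ A := by
        apply integral_nonneg_of_ae
        filter_upwards [hPnn] with s hsP
        exact Real.rpow_nonneg hsP _
      have hB0 : 0 ≤ B := by
        apply integral_nonneg_of_ae
        filter_upwards [hQnn] with s hsQ
        exact Real.rpow_nonneg hsQ _
      have hI2 : (I k)^2 ≤ A * B := by
        have h10 : |I k| ≤ A ^ (1/2:ℝ) * B ^ (1/2:ℝ) := hIabs.trans hCS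
        calc (I k)^2 = |I k|^2 := (sq_abs _).symm
        _ ≤ (A ^ (1/2:ℝ) * B ^ (1/2:ℝ))^2 := pow_le_pow_left₀ (abs_nonneg _) h10 2
        _ = A * B := by
            rw [mul_pow, ← Real.rpow_natCast (A ^ (1/2:ℝ)) 2, ← Real.rpow_natCast
              (B ^ (1/2:ℝ)) 2, ← Real.rpow_mul hA0, ← Real.rpow_mul hB0,
              show (1/2:ℝ) * ((2:ℕ):ℝ) = 1 by push_cast; ring, Real.rpow_one, Real.rpow_one]
      have hAle : A ≤ (1 / lam k) ^ a * Real.Gamma a := by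
        have hAe : A = ∫ s in Set.Ioo 0 t, (t-s)^(a-1) * Real.exp (-(lam k * (t-s))) := by
          rw [hAdef]
          apply setIntegral_congr_fun measurableSet_Ioo
          intro s hs
          show P s ^ (2:ℝ) = _
          rw [rpow_two_eq, ← hPsq_eq s hs]
        rw [hAe]
        exact auxInt_le ha0 hlk ht
      have hBle : lam k ^ a * B ≤ 2 ^ a * ∫ s in Set.Ioo 0 t, G k s := by
        have h12 : lam k ^ a * B = ∫ s in Set.Ioo 0 t, lam k ^ a * Q s ^ (2:ℝ) := by
          rw [hBdef, ← integral_const_mul]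
        have h12b : (2:ℝ) ^ a * (∫ s in Set.Ioo 0 t, G k s)
            = ∫ s in Set.Ioo 0 t, 2 ^ a * G k s := (integral_const_mul _ _).symm
        rw [h12, h12b]
        apply integral_mono_of_nonneg
        · filter_upwards [hQnn] with s hsQ
          exact mul_nonneg (Real.rpow_nonneg hlk.le _) (Real.rpow_nonneg hsQ _)
        · exact (hGint k).const_mul _
        · filter_upwards [ae_restrict_mem measurableSet_Ioo] with s hs
          have hu : 0 < t - s := by linarith [hs.2]
          rw [rpow_two_eq, ← hQsq_eq s hs]
          have hkey := aux_key ha0 ha1 hlam0 (hlam k) hu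
          have h14 := mul_le_mul_of_nonneg_right hkey (sq_nonneg (f s k))
          simp only [hGdef]
          linarith [h14]
      calc lam k ^ (2*a) * (I k)^2 ≤ lam k ^ (2*a) * (A * B) :=
            mul_le_mul_of_nonneg_left hI2 (hrpnn k)
      _ ≤ lam k ^ (2*a) * (((1 / lam k) ^ a * Real.Gamma a) * B) :=
            mul_le_mul_of_nonneg_left (mul_le_mul_of_nonneg_right hAle hB0) (hrpnn k)
      _ = Real.Gamma a * (lam k ^ a * B) := by
            have h13 : lam k ^ (2*a) * (1 / lam k) ^ a = lam k ^ a := by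
              rw [one_div, Real.inv_rpow hlk.le, ← Real.rpow_neg hlk.le, ← Real.rpow_add hlk]
              congr 1
              ring
            calc lam k ^ (2*a) * (((1 / lam k) ^ a * Real.Gamma a) * B)
                = (lam k ^ (2*a) * (1 / lam k) ^ a) * (Real.Gamma a * B) := by ring
            _ = lam k ^ a * (Real.Gamma a * B) := by rw [h13]
            _ = Real.Gamma a * (lam k ^ a * B) := by ring
      _ ≤ Real.Gamma a * (2 ^ a * ∫ s in Set.Ioo 0 t, G k s) :=
            mul_le_mul_of_nonneg_left hBle hGa.le
    -- summing up
    have hFbd : ∀ F : Finset ℕ, ∑ k ∈ F, lam k ^ (2*a) * (I k)^2 ≤ b2 := by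
      intro F
      have s1 : ∑ k ∈ F, lam k ^ (2*a) * (I k)^2 ≤
          ∑ k ∈ F, Real.Gamma a * (2 ^ a * ∫ s in Set.Ioo 0 t, G k s) :=
        Finset.sum_le_sum (fun k _ => hIbd k)
      have s2 : ∑ k ∈ F, Real.Gamma a * (2 ^ a * ∫ s in Set.Ioo 0 t, G k s)
          = Real.Gamma a * 2 ^ a * ∑ k ∈ F, ∫ s in Set.Ioo 0 t, G k s := by
        rw [Finset.mul_sum]
        exact Finset.sum_congr rfl (fun k _ => by ring)
      have s3 : ∑ k ∈ F, ∫ s in Set.Ioo 0 t, G k s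
          = ∫ s in Set.Ioo 0 t, ∑ k ∈ F, G k s :=
        (integral_finset_sum F (fun k _ => hGint k)).symm
      have s4 : (∫ s in Set.Ioo 0 t, ∑ k ∈ F, G k s) ≤
          ∫ s in Set.Ioo 0 t,
            M^2 * ((t - s) ^ ((2 - 2*a) - 1) * Real.exp (-(lam0 / 2 * (t - s)))) := by
        apply integral_mono_of_nonneg
        · filter_upwards [ae_restrict_mem measurableSet_Ioo] with s hs
          exact Finset.sum_nonneg (fun k _ =>
            mul_nonneg (hWnn s hs) (sq_nonneg _))
        · exact hWint.const_mul (M^2)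
        · filter_upwards [ae_restrict_mem measurableSet_Ioo] with s hs
          have hsum2 : ∑ k ∈ F, (f s k)^2 ≤ M^2 := by
            have h5 := lp.sum_rpow_le_norm_rpow (p := 2) (by norm_num) (f s) F
            simp only [ENNReal.toReal_ofNat] at h5
            have h6 : ∀ y : ℝ, ‖y‖ ^ (2:ℝ) = y^2 := by
              intro y
              rw [show (2:ℝ) = ((2:ℕ):ℝ) by norm_num, Real.rpow_natCast,
                Real.norm_eq_abs, sq_abs]
            have h7 : ‖f s‖ ^ (2:ℝ) ≤ M^2 := by
              rw [show (2:ℝ) = ((2:ℕ):ℝ) by norm_num, Real.rpow_natCast]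
              exact pow_le_pow_left₀ (norm_nonneg _) (hfM s hs.1.le) 2
            calc ∑ k ∈ F, (f s k)^2 = ∑ k ∈ F, ‖f s k‖ ^ (2:ℝ) := by
                  exact Finset.sum_congr rfl (fun k _ => (h6 _).symm)
            _ ≤ ‖f s‖ ^ (2:ℝ) := h5
            _ ≤ M^2 := h7
          have hW := hWnn s hs
          calc ∑ k ∈ F, G k s
              = ((t - s) ^ ((2 - 2*a) - 1) * Real.exp (-(lam0 / 2 * (t - s)))) *
                ∑ k ∈ F, (f s k)^2 := by
                rw [Finset.mul_sum]
          _ ≤ M^2 * ((t - s) ^ ((2 - 2*a) - 1) * Real.exp (-(lam0 / 2 * (t - s)))) := by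
                rw [mul_comm (M^2) _]
                exact mul_le_mul_of_nonneg_left hsum2 hW
      have s5 : (∫ s in Set.Ioo 0 t,
          M^2 * ((t - s) ^ ((2 - 2*a) - 1) * Real.exp (-(lam0 / 2 * (t - s)))))
          ≤ M^2 * K := by
        rw [integral_const_mul]
        apply mul_le_mul_of_nonneg_left ?_ (sq_nonneg M)
        rw [hKdef]
        exact auxInt_le hc2 hl0h ht
      have hGanneg : (0:ℝ) ≤ Real.Gamma a * 2 ^ a := by positivity
      calc ∑ k ∈ F, lam k ^ (2*a) * (I k)^2
          ≤ Real.Gamma a * 2 ^ a * ∫ s in Set.Ioo 0 t, ∑ k ∈ F, G k s := by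
            rw [← s3, ← s2]; exact s1
      _ ≤ Real.Gamma a * 2 ^ a * (M^2 * K) := by
            apply mul_le_mul_of_nonneg_left (s4.trans s5) hGanneg
      _ = b2 := by rw [hb2def]; ring
    have h2nn : ∀ k, 0 ≤ lam k ^ (2*a) * (I k)^2 :=
      fun k => mul_nonneg (hrpnn k) (sq_nonneg _)
    have h2sum : Summable (fun k => lam k ^ (2*a) * (I k)^2) :=
      summable_of_sum_le h2nn hFbd
    have h2tsum : ∑' k, lam k ^ (2*a) * (I k)^2 ≤ b2 := Summable.tsum_le_of_sum_le h2sum hFbd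
    -- combine the two parts
    have hptle : ∀ k, lam k ^ (2*a) * (X t k)^2 ≤
        2*(lam k ^ (2*a) * (S t x k)^2) + 2*(lam k ^ (2*a) * (I k)^2) := by
      intro k
      rw [hcoord k, hy1 k]
      have hL := hrpnn k
      nlinarith [mul_nonneg hL (sq_nonneg (Real.exp (-(lam k * t)) * x k - I k))]
    have hbsum : Summable (fun k => 2*(lam k ^ (2*a) * (S t x k)^2) +
        2*(lam k ^ (2*a) * (I k)^2)) := (h1sum.mul_left 2).add (h2sum.mul_left 2)
    have hsumX : Summable (fun k => lam k ^ (2*a) * (X t k)^2) :=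
      Summable.of_nonneg_of_le (fun k => mul_nonneg (hrpnn k) (sq_nonneg _)) hptle hbsum
    refine ⟨hsumX, ?_⟩
    have hT : ∑' k, lam k ^ (2*a) * (X t k)^2 ≤ 2*Tx + 2*b2 := by
      calc ∑' k, lam k ^ (2*a) * (X t k)^2
          ≤ ∑' k, (2*(lam k ^ (2*a) * (S t x k)^2) + 2*(lam k ^ (2*a) * (I k)^2)) :=
            Summable.tsum_le_tsum hptle hsumX hbsum
      _ = 2*(∑' k, lam k ^ (2*a) * (S t x k)^2) + 2*(∑' k, lam k ^ (2*a) * (I k)^2) := by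
            rw [Summable.tsum_add (h1sum.mul_left 2) (h2sum.mul_left 2), tsum_mul_left, tsum_mul_left]
      _ ≤ 2*Tx + 2*b2 := by
            linarith [h1tsum, h2tsum]
    show Real.sqrt _ ≤ _
    have hs1 : Real.sqrt (∑' k, lam k ^ (2*a) * (X t k)^2) ≤ Real.sqrt (2*Tx + 2*b2) :=
      Real.sqrt_le_sqrt hT
    have hs2 : Real.sqrt (2*Tx + 2*b2) ≤ Real.sqrt (2*Tx) + Real.sqrt (2*b2) := by
      have h8 : 2*Tx + 2*b2 ≤ (Real.sqrt (2*Tx) + Real.sqrt (2*b2))^2 := by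
        nlinarith [Real.sq_sqrt (by linarith : (0:ℝ) ≤ 2*Tx),
          Real.sq_sqrt (by linarith : (0:ℝ) ≤ 2*b2),
          Real.sqrt_nonneg (2*Tx), Real.sqrt_nonneg (2*b2)]
      have h9 := Real.sqrt_le_sqrt h8
      rwa [Real.sqrt_sq (by positivity)] at h9
    have hs3 : Real.sqrt (2*Tx) = Real.sqrt 2 * Real.sqrt Tx := Real.sqrt_mul (by norm_num) Tx
    rw [hnx]
    nlinarith [Real.sqrt_nonneg (2:ℝ), Real.sqrt_nonneg (2*b2), Real.sqrt_nonneg Tx,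
      mul_nonneg (Real.sqrt_nonneg (2*b2)) (Real.sqrt_nonneg Tx),
      mul_nonneg (Real.sqrt_nonneg (2:ℝ)) (Real.sqrt_nonneg Tx)]


end
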